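/- For any four linear subspaces U₁, U₂, V₁, V₂ of a finite-dimensional vector space over a field, the following dimension identity holds: dim((U₁ + U₂) ∩ (V₁ + V₂)) + dim(U₁ ∩ U₂) + dim(V₁ ∩ V₂) = dim((U₁ + V₁) ∩ (U₂ + V₂)) + dim(U₁ ∩ V₁) + dim(U₂ ∩ V₂). -/
import Mathlib

/-- The dimension identity of Jeong–Kim–Oum (2017, Lemma 25) for four subspaces of a
finite-dimensional vector space. -/
theorem dim_switching_identity {F W : Type*} [Field F] [AddCommGroup W] [Module F W]
    [FiniteDimensional F W] (U₁ U₂ V₁ V₂ : Submodule F W) :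
    Module.finrank F ↥((U₁ ⊔ U₂) ⊓ (V₁ ⊔ V₂)) + Module.finrank F ↥(U₁ ⊓ U₂) +
        Module.finrank F ↥(V₁ ⊓ V₂) =
      Module.finrank F ↥((U₁ ⊔ V₁) ⊓ (U₂ ⊔ V₂)) + Module.finrank F ↥(U₁ ⊓ V₁) +
        Module.finrank F ↥(U₂ ⊓ V₂) := by
  have h1 := Submodule.finrank_sup_add_finrank_inf_eq (U₁ ⊔ U₂) (V₁ ⊔ V₂)
  have h2 := Submodule.finrank_sup_add_finrank_inf_eq (U₁ ⊔ V₁) (U₂ ⊔ V₂)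
  have h3 := Submodule.finrank_sup_add_finrank_inf_eq U₁ U₂
  have h4 := Submodule.finrank_sup_add_finrank_inf_eq V₁ V₂
  have h5 := Submodule.finrank_sup_add_finrank_inf_eq U₁ V₁
  have h6 := Submodule.finrank_sup_add_finrank_inf_eq U₂ V₂
  have hsup : (U₁ ⊔ U₂) ⊔ (V₁ ⊔ V₂) = (U₁ ⊔ V₁) ⊔ (U₂ ⊔ V₂) := sup_sup_sup_comm U₁ U₂ V₁ V₂
  rw [hsup] at h1
  omega
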